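/- If H is a partial cube and E_f is a Θ-class of H, then the graph H \ E_f obtained by deleting the edges of E_f has exactly two connected components. -/

import Mathlib

open SimpleGraph

/-- The hypercube graph `Q_d` on `{0,1}^d`: two vertices are adjacent iff they
differ in exactly one coordinate. -/
def hypercubeGraph (d : ℕ) : SimpleGraph (Fin d → Bool) where
  Adj x y := hammingDist x y = 1
  symm := by
    constructor
    intro x y h
    rwa [hammingDist_comm]
  loopless := by
    constructor
    intro x h
    simp [hammingDist_self] at h

/-- A partial cube: a connected simple graph admitting an isometric embedding
into some hypercube. -/
def IsPartialCube {V : Type} (G : SimpleGraph V) : Prop :=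
  G.Connected ∧
    ∃ (d : ℕ) (φ : V → (Fin d → Bool)), Function.Injective φ ∧
      ∀ v w : V, (hypercubeGraph d).dist (φ v) (φ w) = G.dist v w

/-- The Djoković–Winkler relation `Θ` on (unordered) edges: `e = xy` and
`f = uv` are related iff `d(x,u) + d(y,v) ≠ d(x,v) + d(y,u)`. -/
def DWRel {V : Type} (G : SimpleGraph V) (e f : Sym2 V) : Prop :=
  ∃ x y u v : V, e = s(x, y) ∧ f = s(u, v) ∧
    G.dist x u + G.dist y v ≠ G.dist x v + G.dist y u

/-- A `Θ`-class of `G`: the set of all edges of `G` related to some fixed edge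
`e` of `G` by the Djoković–Winkler relation. -/
def IsThetaClass {V : Type} (G : SimpleGraph V) (C : Set (Sym2 V)) : Prop :=
  ∃ e ∈ G.edgeSet, C = {f | f ∈ G.edgeSet ∧ DWRel G e f}

/-! ### Auxiliary lemmas -/

/-- One flip: equal except at coordinate `i`, where they differ. -/
def Flip {d : ℕ} (i : Fin d) (X Y : Fin d → Bool) : Prop :=
  X i ≠ Y i ∧ ∀ k ≠ i, X k = Y k

lemma flip_symm {d : ℕ} {i : Fin d} {X Y : Fin d → Bool} (h : Flip i X Y) : Flip i Y X :=
  ⟨h.1.symm, fun k hk => (h.2 k hk).symm⟩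

lemma hamming_sum' {d : ℕ} (x y : Fin d → Bool) :
    hammingDist x y = ∑ k, if x k ≠ y k then 1 else 0 := by
  rw [hammingDist, Finset.card_filter]

lemma hypercube_exists_walk {d : ℕ} : ∀ (n : ℕ) (x y : Fin d → Bool),
    hammingDist x y = n → ∃ p : (hypercubeGraph d).Walk x y, p.length = n := by
  intro n
  induction n with
  | zero => intro x y h; obtain rfl := hammingDist_eq_zero.mp h; exact ⟨.nil, rfl⟩
  | succ n ih =>
    intro x y h
    have hne : x ≠ y := by
      intro h'; subst h'; simp [hammingDist_self] at h
    obtain ⟨i, hi⟩ : ∃ i, x i ≠ y i := by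
      by_contra hc; push_neg at hc; exact hne (funext hc)
    set x' : Fin d → Bool := Function.update x i (y i) with hx'
    have hxx' : (hypercubeGraph d).Adj x x' := by
      show hammingDist x x' = 1
      rw [hammingDist]
      have : ({k | x k ≠ x' k} : Finset (Fin d)) = {i} := by
        ext k
        simp only [Finset.mem_filter, Finset.mem_univ, true_and, Finset.mem_singleton]
        constructor
        · intro hk
          by_contra hki
          exact hk (by simp [hx', Function.update_of_ne hki])
        · intro hk; subst hk; simpa [hx'] using hi
      rw [this]; simp
    have hx'y : hammingDist x' y = n := by
      have hset : ({k | x' k ≠ y k} : Finset (Fin d))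
          = ({k | x k ≠ y k} : Finset (Fin d)).erase i := by
        ext k
        simp only [Finset.mem_filter, Finset.mem_univ, true_and, Finset.mem_erase]
        constructor
        · intro hk
          rcases eq_or_ne k i with rfl | hki
          · exact absurd (by simp [hx'] : x' k = y k) hk
          · exact ⟨hki, by simpa [hx', Function.update_of_ne hki] using hk⟩
        · rintro ⟨hki, hk⟩; simpa [hx', Function.update_of_ne hki] using hk
      have hmem : i ∈ ({k | x k ≠ y k} : Finset (Fin d)) := by simp [hi]
      rw [hammingDist, hset, Finset.card_erase_of_mem hmem]
      rw [hammingDist] at h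
      omega
    obtain ⟨p, hp⟩ := ih x' y hx'y
    exact ⟨.cons hxx' p, by simp [hp]⟩

lemma hamming_le_walk_length {d : ℕ} {x y : Fin d → Bool}
    (p : (hypercubeGraph d).Walk x y) : hammingDist x y ≤ p.length := by
  induction p with
  | nil => simp [hammingDist_self]
  | cons h p ih =>
    calc hammingDist _ _ ≤ hammingDist _ _ + hammingDist _ _ := hammingDist_triangle _ _ _
    _ ≤ 1 + p.length := Nat.add_le_add (le_of_eq h) ih
    _ = _ := by simp [Nat.add_comm]

lemma hypercube_dist {d : ℕ} (x y : Fin d → Bool) :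
    (hypercubeGraph d).dist x y = hammingDist x y := by
  obtain ⟨p, hp⟩ := hypercube_exists_walk (hammingDist x y) x y rfl
  refine le_antisymm (hp ▸ SimpleGraph.dist_le p) ?_
  obtain ⟨q, hq⟩ := p.reachable.exists_walk_length_eq_dist
  exact hq ▸ hamming_le_walk_length q

lemma hamming_one_flip {d : ℕ} {x y : Fin d → Bool} (h : hammingDist x y = 1) :
    ∃ i, Flip i x y := by
  rw [hammingDist, Finset.card_eq_one] at h
  obtain ⟨i, hi⟩ := h
  refine ⟨i, ?_, ?_⟩
  · have : i ∈ ({k | x k ≠ y k} : Finset (Fin d)) := hi ▸ Finset.mem_singleton_self i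
    simpa using this
  · intro k hk
    by_contra hc
    have : k ∈ ({k | x k ≠ y k} : Finset (Fin d)) := by simpa using hc
    rw [hi, Finset.mem_singleton] at this
    exact hk this

lemma hamming_flip_incr {d : ℕ} {X X' Y : Fin d → Bool} {i : Fin d}
    (h : Flip i X X') (hy : X i = Y i) :
    hammingDist X' Y = hammingDist X Y + 1 := by
  have hset : ({k | X' k ≠ Y k} : Finset (Fin d))
      = insert i ({k | X k ≠ Y k} : Finset (Fin d)) := by
    ext k
    simp only [Finset.mem_filter, Finset.mem_univ, true_and, Finset.mem_insert]
    rcases eq_or_ne k i with rfl | hki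
    · simp only [eq_self_iff_true, true_or, iff_true]
      intro hc
      exact h.1 (by rw [hc, hy])
    · rw [h.2 k hki]
      simp [hki]
  have hnot : i ∉ ({k | X k ≠ Y k} : Finset (Fin d)) := by simp [hy]
  rw [hammingDist, hammingDist, hset, Finset.card_insert_of_notMem hnot]

lemma dw_vec {d : ℕ} (X Y U W : Fin d → Bool) (i j : Fin d)
    (hXY : Flip i X Y) (hUW : Flip j U W) :
    (hammingDist X U + hammingDist Y W ≠ hammingDist X W + hammingDist Y U) ↔ i = j := by
  simp only [hamming_sum', ← Finset.sum_add_distrib]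
  set F : Fin d → ℕ := fun k => (if X k ≠ U k then 1 else 0) + (if Y k ≠ W k then 1 else 0)
    with hF
  set G : Fin d → ℕ := fun k => (if X k ≠ W k then 1 else 0) + (if Y k ≠ U k then 1 else 0)
    with hG
  rcases eq_or_ne i j with rfl | hij
  · simp only [eq_self_iff_true, iff_true]
    have hFG : ∀ k ∈ Finset.univ.erase i, F k = G k := by
      intro k hk
      have hki : k ≠ i := (Finset.mem_erase.mp hk).1
      have h1 := hXY.2 k hki
      have h2 := hUW.2 k hki
      simp [hF, hG, h1, h2]
    have hsum : ∑ k ∈ Finset.univ.erase i, F k = ∑ k ∈ Finset.univ.erase i, G k :=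
      Finset.sum_congr rfl hFG
    rw [← Finset.sum_erase_add Finset.univ F (Finset.mem_univ i),
        ← Finset.sum_erase_add Finset.univ G (Finset.mem_univ i), hsum]
    have : F i ≠ G i := by
      have h1 := hXY.1
      have h2 := hUW.1
      simp only [hF, hG]
      cases hx : X i <;> cases hu : U i <;> cases hy : Y i <;> cases hw : W i <;> simp_all
    omega
  · simp only [hij, iff_false, not_not]
    apply Finset.sum_congr rfl
    intro k _
    rcases eq_or_ne k i with rfl | hki
    · have h1 := hXY.1
      have h2 := hUW.2 k hij
      simp only [hF, hG]
      cases hx : X k <;> cases hu : U k <;> cases hy : Y k <;> simp_all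
    rcases eq_or_ne k j with rfl | hkj
    · have h1 := hUW.1
      have h2 := hXY.2 k hki
      simp only [hF, hG]
      cases hx : X k <;> cases hu : U k <;> cases hw : W k <;> simp_all
    · have h1 := hXY.2 k hki
      have h2 := hUW.2 k hkj
      simp [hF, hG, h1, h2]

/-- If `H` is a partial cube and `E_f` is a `Θ`-class of `H`, then the graph
`H \ E_f` obtained by deleting the edges of `E_f` has exactly two connected
components. -/
theorem deleteEdges_thetaClass_two_components {V : Type} (H : SimpleGraph V)
    (hH : IsPartialCube H) (C : Set (Sym2 V)) (hC : IsThetaClass H C) :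
    ∃ c₁ c₂ : (H.deleteEdges C).ConnectedComponent, c₁ ≠ c₂ ∧
      ∀ c : (H.deleteEdges C).ConnectedComponent, c = c₁ ∨ c = c₂ := by
  obtain ⟨hconn, d, φ, hinj, hφ⟩ := hH
  obtain ⟨e, he, hCeq⟩ := hC
  have hdist : ∀ u v : V, H.dist u v = hammingDist (φ u) (φ v) := fun u v =>
    (hφ u v).symm.trans (hypercube_dist _ _)
  have edge_flip : ∀ {u v : V}, H.Adj u v → ∃ j, Flip j (φ u) (φ v) := by
    intro u v h
    apply hamming_one_flip
    rw [← hdist]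
    exact SimpleGraph.dist_eq_one_iff_adj.mpr h
  revert he hCeq
  induction e using Sym2.ind with
  | _ a b =>
  intro he hCeq
  have hab : H.Adj a b := H.mem_edgeSet.mp he
  obtain ⟨i₀, hi₀⟩ := edge_flip hab
  -- DW relation ↔ same flipped coordinate
  have hDWiff : ∀ u v : V, H.Adj u v → ∀ j, Flip j (φ u) (φ v) →
      (DWRel H s(a, b) s(u, v) ↔ i₀ = j) := by
    intro u v huv j hj
    constructor
    · rintro ⟨x, y, p, q, hxy, hpq, hne⟩
      simp only [hdist] at hne
      rw [Sym2.eq_iff] at hxy hpq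
      have hx : Flip i₀ (φ x) (φ y) := by
        rcases hxy with ⟨rfl, rfl⟩ | ⟨rfl, rfl⟩
        · exact hi₀
        · exact flip_symm hi₀
      have hp : Flip j (φ p) (φ q) := by
        rcases hpq with ⟨rfl, rfl⟩ | ⟨rfl, rfl⟩
        · exact hj
        · exact flip_symm hj
      exact (dw_vec _ _ _ _ i₀ j hx hp).mp hne
    · rintro rfl
      refine ⟨a, b, u, v, rfl, rfl, ?_⟩
      simp only [hdist]
      exact (dw_vec _ _ _ _ i₀ i₀ hi₀ hj).mpr rfl
  have mem_C_iff : ∀ u v : V, H.Adj u v → ∀ j, Flip j (φ u) (φ v) →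
      (s(u, v) ∈ C ↔ j = i₀) := by
    intro u v huv j hj
    rw [hCeq]
    simp only [Set.mem_setOf_eq, SimpleGraph.mem_edgeSet]
    constructor
    · rintro ⟨-, hdw⟩
      exact ((hDWiff u v huv j hj).mp hdw).symm
    · rintro rfl
      exact ⟨huv, (hDWiff u v huv j hj).mpr rfl⟩
  -- edges of the deleted graph preserve coordinate i₀
  have key1 : ∀ {u v : V}, (H.deleteEdges C).Adj u v → φ u i₀ = φ v i₀ := by
    intro u v h
    rw [SimpleGraph.deleteEdges_adj] at h
    obtain ⟨j, hj⟩ := edge_flip h.1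
    rcases eq_or_ne j i₀ with rfl | hji
    · exact absurd ((mem_C_iff u v h.1 j hj).mpr rfl) h.2
    · exact hj.2 i₀ (Ne.symm hji)
  have key2 : ∀ {u v : V}, H.Adj u v → φ u i₀ = φ v i₀ → (H.deleteEdges C).Adj u v := by
    intro u v h heq
    obtain ⟨j, hj⟩ := edge_flip h
    have hji : j ≠ i₀ := by
      rintro rfl
      exact hj.1 heq
    rw [SimpleGraph.deleteEdges_adj]
    refine ⟨h, fun hmem => hji ((mem_C_iff u v h j hj).mp hmem)⟩
  -- vertices on the same side are reachable in the deleted graph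
  have key3 : ∀ (n : ℕ) (u v : V), H.dist u v = n → φ u i₀ = φ v i₀ →
      (H.deleteEdges C).Reachable u v := by
    intro n
    induction n with
    | zero =>
      intro u v h _
      obtain rfl := (hconn.dist_eq_zero_iff).mp h
      exact SimpleGraph.Reachable.refl u
    | succ n ih =>
      intro u v h heq
      obtain ⟨p, hp⟩ := SimpleGraph.exists_walk_of_dist_ne_zero (by omega : H.dist u v ≠ 0)
      cases p with
      | nil => exact absurd (hp.trans h) (by simp)
      | @cons _ u' _ hadj q =>
        have hqlen : q.length = n := by
          simp only [SimpleGraph.Walk.length_cons, h] at hp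
          omega
        have hdistq : H.dist u' v = n := by
          have h1 : H.dist u' v ≤ n := hqlen ▸ SimpleGraph.dist_le q
          have h2 : H.dist u v ≤ H.dist u u' + H.dist u' v := hconn.dist_triangle
          have h3 : H.dist u u' = 1 := SimpleGraph.dist_eq_one_iff_adj.mpr hadj
          omega
        obtain ⟨j, hj⟩ := edge_flip hadj
        rcases eq_or_ne j i₀ with rfl | hji
        · exfalso
          have hincr : hammingDist (φ u') (φ v) = hammingDist (φ u) (φ v) + 1 :=
            hamming_flip_incr hj heq
          have e1 : hammingDist (φ u') (φ v) = n := by rw [← hdist]; exact hdistq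
          have e2 : hammingDist (φ u) (φ v) = n + 1 := by rw [← hdist]; exact h
          omega
        · have heq' : φ u i₀ = φ u' i₀ := hj.2 i₀ (Ne.symm hji)
          exact ((key2 hadj heq').reachable).trans (ih u' v hdistq (heq'.symm.trans heq))
  have key4 : ∀ {u v : V}, (H.deleteEdges C).Reachable u v → φ u i₀ = φ v i₀ := by
    intro u v h
    obtain ⟨p⟩ := h
    induction p with
    | nil => rfl
    | cons hadj p ih => exact (key1 hadj).trans ih
  refine ⟨(H.deleteEdges C).connectedComponentMk a, (H.deleteEdges C).connectedComponentMk b,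
    ?_, ?_⟩
  · intro hcc
    exact hi₀.1 (key4 (SimpleGraph.ConnectedComponent.eq.mp hcc))
  · intro c
    induction c using SimpleGraph.ConnectedComponent.ind with
    | _ v =>
    rcases eq_or_ne (φ v i₀) (φ a i₀) with hv | hv
    · left
      exact SimpleGraph.ConnectedComponent.eq.mpr (key3 (H.dist v a) v a rfl hv)
    · right
      have hvb : φ v i₀ = φ b i₀ := by
        have := hi₀.1
        cases hva : φ v i₀ <;> cases haa : φ a i₀ <;> cases hbb : φ b i₀ <;> simp_all
      exact SimpleGraph.ConnectedComponent.eq.mpr (key3 (H.dist v b) v b rfl hvb)
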